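/- Let ι be a nonempty finite type, s : ι → EuclideanSpace ℝ (Fin d) a family of points, and w : ι → ℕ weights with w i ≥ 1 for all i; set W = Σ_i w i, μ_w = (1/W) · Σ_i (w i : ℝ) • s i and V = Σ_i (w i : ℝ) · ‖s i − μ_w‖². Then for every real ε > 0 and every integer m with m > 1/ε, there exists a tuple r : Fin m → ι such that Σ_i (w i : ℝ) · ‖s i − μ(r)‖² ≤ (1 + ε) · V, where μ(r) = (1/m) · Σ_{j<m} s (r j). -/

import Mathlib

/-- The total weight `W = Σ_i w i`. -/
noncomputable def totalWeight {ι : Type*} [Fintype ι] (w : ι → ℕ) : ℝ :=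
  ∑ i, (w i : ℝ)

/-- The weighted mean `μ_w = (1/W) · Σ_i w i • s i`. -/
noncomputable def weightedMean {d : ℕ} {ι : Type*} [Fintype ι]
    (s : ι → EuclideanSpace ℝ (Fin d)) (w : ι → ℕ) : EuclideanSpace ℝ (Fin d) :=
  (1 / totalWeight w) • ∑ i, (w i : ℝ) • s i

/-- The total weighted squared distance to the weighted mean,
`V = Σ_i w i · ‖s i − μ_w‖²`. -/
noncomputable def weightedVar {d : ℕ} {ι : Type*} [Fintype ι]
    (s : ι → EuclideanSpace ℝ (Fin d)) (w : ι → ℕ) : ℝ :=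
  ∑ i, (w i : ℝ) * ‖s i - weightedMean s w‖ ^ 2

/-- The probability mass function `f(i) = w i / W`. -/
noncomputable def pmfWeight {ι : Type*} [Fintype ι] (w : ι → ℕ) (i : ι) : ℝ :=
  (w i : ℝ) / totalWeight w

/-- The product probability mass on `Fin m → ι` under which the `m` coordinates
are independent samples distributed according to `pmfWeight w`. -/
noncomputable def prodProb {ι : Type*} [Fintype ι] (w : ι → ℕ) {m : ℕ}
    (r : Fin m → ι) : ℝ :=
  ∏ j, pmfWeight w (r j)

/-- The sample mean `μ(r) = (1/m) · Σ_j s (r j)`. -/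
noncomputable def sampleMean {d : ℕ} {ι : Type*} {m : ℕ}
    (s : ι → EuclideanSpace ℝ (Fin d)) (r : Fin m → ι) : EuclideanSpace ℝ (Fin d) :=
  (1 / (m : ℝ)) • ∑ j, s (r j)



lemma scalar_key {ι : Type*} [Fintype ι] (f x : ι → ℝ) (hf1 : ∑ i, f i = 1)
    (hx : ∑ i, f i * x i = 0) (m : ℕ) :
    ∑ r : Fin m → ι, (∏ j, f (r j)) * (∑ j, x (r j)) ^ 2 = m * ∑ i, f i * x i ^ 2 := by
  classical
  set g : Fin m → Fin m → Fin m → ι → ℝ :=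
    fun j k l i => f i * (if l = j then x i else 1) * (if l = k then x i else 1) with hg
  have hfac : ∀ (j k : Fin m) (r : Fin m → ι),
      (∏ l, f (r l)) * (x (r j) * x (r k)) = ∏ l, g j k l (r l) := by
    intro j k r
    simp only [hg, Finset.prod_mul_distrib,
      Finset.prod_ite_eq' Finset.univ j (fun l => x (r l)),
      Finset.prod_ite_eq' Finset.univ k (fun l => x (r l)), Finset.mem_univ, if_true]
    ring
  have hcol : ∀ j k l : Fin m, ∑ i, g j k l i =
      if l = j then (if l = k then ∑ i, f i * x i ^ 2 else 0)
      else (if l = k then 0 else 1) := by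
    intro j k l
    by_cases h1 : l = j <;> by_cases h2 : l = k <;>
      simp only [hg, h1, h2, if_true, if_false, mul_one] <;>
      simp [h1, h2, hx, hf1, sq, mul_assoc]
  have hsum : ∀ j k : Fin m, (∑ r : Fin m → ι, ∏ l, g j k l (r l)) = ∏ l, ∑ i, g j k l i := by
    intro j k
    rw [Finset.prod_univ_sum, Fintype.piFinset_univ]
  have hT : ∀ j k : Fin m, (∑ r : Fin m → ι, ∏ l, g j k l (r l)) =
      if j = k then ∑ i, f i * x i ^ 2 else 0 := by
    intro j k
    rw [hsum]
    by_cases hjk : j = k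
    · subst hjk
      rw [if_pos rfl]
      rw [Finset.prod_eq_single j (fun l _ hl => by rw [hcol]; simp [hl])
        (fun h => absurd (Finset.mem_univ j) h)]
      rw [hcol]; simp
    · rw [if_neg hjk]
      refine Finset.prod_eq_zero (Finset.mem_univ j) ?_
      rw [hcol]; simp [hjk]
  calc ∑ r : Fin m → ι, (∏ j, f (r j)) * (∑ j, x (r j)) ^ 2
      = ∑ r : Fin m → ι, ∑ j, ∑ k, ∏ l, g j k l (r l) := by
        refine Finset.sum_congr rfl fun r _ => ?_
        rw [sq, Finset.sum_mul_sum]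
        rw [Finset.mul_sum]
        refine Finset.sum_congr rfl fun j _ => ?_
        rw [Finset.mul_sum]
        exact Finset.sum_congr rfl fun k _ => hfac j k r
    _ = ∑ j, ∑ k, ∑ r : Fin m → ι, ∏ l, g j k l (r l) := by
        rw [Finset.sum_comm]
        exact Finset.sum_congr rfl fun j _ => Finset.sum_comm
    _ = ∑ j : Fin m, ∑ i, f i * x i ^ 2 := by
        refine Finset.sum_congr rfl fun j _ => ?_
        simp_rw [hT]
        simp
    _ = m * ∑ i, f i * x i ^ 2 := by
        rw [Finset.sum_const, Finset.card_univ, Fintype.card_fin, nsmul_eq_mul]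

lemma vec_key {d : ℕ} {ι : Type*} [Fintype ι] (f : ι → ℝ)
    (v : ι → EuclideanSpace ℝ (Fin d)) (hf1 : ∑ i, f i = 1)
    (hv : ∑ i, f i • v i = 0) (m : ℕ) :
    ∑ r : Fin m → ι, (∏ j, f (r j)) * ‖∑ j, v (r j)‖ ^ 2
      = m * ∑ i, f i * ‖v i‖ ^ 2 := by
  have hnorm : ∀ u : EuclideanSpace ℝ (Fin d), ‖u‖ ^ 2 = ∑ t, (u t) ^ 2 := by
    intro u
    rw [EuclideanSpace.norm_eq, Real.sq_sqrt (Finset.sum_nonneg fun t _ => sq_nonneg _)]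
    simp [Real.norm_eq_abs, sq_abs]
  have happ : ∀ (r : Fin m → ι) (t : Fin d), (∑ j, v (r j)) t = ∑ j, v (r j) t := by
    intro r t
    rw [WithLp.ofLp_sum]
    exact Finset.sum_apply t _ _
  have hxt : ∀ t : Fin d, ∑ i, f i * v i t = 0 := by
    intro t
    have h := congrArg (fun u : EuclideanSpace ℝ (Fin d) => u t) hv
    simp only at h
    rw [show ((0 : EuclideanSpace ℝ (Fin d)) t) = 0 from rfl, WithLp.ofLp_sum, Finset.sum_apply] at h
    simpa [PiLp.smul_apply, smul_eq_mul] using h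
  calc ∑ r : Fin m → ι, (∏ j, f (r j)) * ‖∑ j, v (r j)‖ ^ 2
      = ∑ r : Fin m → ι, ∑ t, (∏ j, f (r j)) * (∑ j, v (r j) t) ^ 2 := by
        refine Finset.sum_congr rfl fun r _ => ?_
        rw [hnorm, Finset.mul_sum]
        exact Finset.sum_congr rfl fun t _ => by rw [happ]
    _ = ∑ t, ∑ r : Fin m → ι, (∏ j, f (r j)) * (∑ j, v (r j) t) ^ 2 := Finset.sum_comm
    _ = ∑ t, (m : ℝ) * ∑ i, f i * (v i t) ^ 2 := by
        exact Finset.sum_congr rfl fun t _ => scalar_key f (fun i => v i t) hf1 (hxt t) m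
    _ = m * ∑ i, f i * ‖v i‖ ^ 2 := by
        rw [← Finset.mul_sum, Finset.sum_comm]
        congr 1
        refine Finset.sum_congr rfl fun i _ => ?_
        rw [hnorm, Finset.mul_sum]

theorem exists_good_sample_center {d : ℕ} {ι : Type*} [Fintype ι] [Nonempty ι]
    (s : ι → EuclideanSpace ℝ (Fin d)) (w : ι → ℕ) (hw : ∀ i, 1 ≤ w i)
    {ε : ℝ} (hε : 0 < ε) {m : ℕ} (hm : 1 / ε < (m : ℝ)) :
    ∃ r : Fin m → ι,
      ∑ i, (w i : ℝ) * ‖s i - sampleMean s r‖ ^ 2 ≤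
        (1 + ε) * weightedVar s w := by
  classical
  set W := totalWeight w with hWdef
  have hwpos : ∀ i, (0 : ℝ) < w i := fun i => by
    exact_mod_cast Nat.lt_of_lt_of_le Nat.zero_lt_one (hw i)
  have hW : 0 < W := Finset.sum_pos (fun i _ => hwpos i) Finset.univ_nonempty
  have hm0 : (0 : ℝ) < m := lt_trans (by positivity) hm
  have hmε : 1 / (m : ℝ) < ε := by
    rw [div_lt_iff₀ hm0]
    rw [div_lt_iff₀ hε] at hm
    linarith [mul_comm ε (m : ℝ)]
  set μ := weightedMean s w with hμdef
  set f := pmfWeight w with hfdef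
  have hf1 : ∑ i, f i = 1 := by
    simp only [hfdef, pmfWeight, ← Finset.sum_div]
    exact div_self hW.ne'
  have hfpos : ∀ i, 0 < f i := fun i => div_pos (hwpos i) hW
  set v : ι → EuclideanSpace ℝ (Fin d) := fun i => s i - μ with hvdef
  have hwv0 : ∑ i, (w i : ℝ) • v i = 0 := by
    simp only [hvdef, smul_sub, Finset.sum_sub_distrib, ← Finset.sum_smul]
    rw [hμdef, weightedMean, smul_smul]
    rw [show (∑ i, (w i : ℝ)) * (1 / totalWeight w) = 1 from by
      rw [totalWeight] at hWdef; rw [← hWdef]; field_simp; exact div_self hW.ne']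
    rw [one_smul, sub_self]
  have hfv0 : ∑ i, f i • v i = 0 := by
    have : ∀ i, f i • v i = (1 / W) • ((w i : ℝ) • v i) := fun i => by
      rw [smul_smul, hfdef, pmfWeight]; ring_nf; rfl
    simp_rw [this, ← Finset.smul_sum, hwv0, smul_zero]
  have hfvV : ∑ i, f i * ‖v i‖ ^ 2 = weightedVar s w / W := by
    rw [weightedVar, Finset.sum_div]
    refine Finset.sum_congr rfl fun i _ => ?_
    rw [hfdef, pmfWeight]
    ring
  set δ : (Fin m → ι) → EuclideanSpace ℝ (Fin d) := fun r => sampleMean s r - μ with hδdef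
  have hδ : ∀ r : Fin m → ι, δ r = (1 / (m : ℝ)) • ∑ j, v (r j) := by
    intro r
    simp only [hδdef, hvdef, sampleMean, Finset.sum_sub_distrib, smul_sub, Finset.sum_const,
      Finset.card_univ, Fintype.card_fin]
    congr 1
    rw [← Nat.cast_smul_eq_nsmul ℝ m μ, smul_smul, one_div, inv_mul_cancel₀ hm0.ne', one_smul]
  have hcost : ∀ r : Fin m → ι, ∑ i, (w i : ℝ) * ‖s i - sampleMean s r‖ ^ 2
      = weightedVar s w + W * ‖δ r‖ ^ 2 := by
    intro r
    have hsplit : ∀ i, s i - sampleMean s r = v i - δ r := fun i => by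
      simp only [hvdef, hδdef]; abel
    simp_rw [hsplit, norm_sub_sq_real]
    have hexp : ∀ i, (w i : ℝ) * (‖v i‖ ^ 2 - 2 * (inner ℝ (v i) (δ r) : ℝ) + ‖δ r‖ ^ 2)
        = (w i : ℝ) * ‖v i‖ ^ 2 - (w i : ℝ) * (2 * (inner ℝ (v i) (δ r) : ℝ))
          + (w i : ℝ) * ‖δ r‖ ^ 2 := fun i => by ring
    simp_rw [hexp]
    rw [Finset.sum_add_distrib, Finset.sum_sub_distrib]
    have hmid : ∑ i, (w i : ℝ) * (2 * (inner ℝ (v i) (δ r) : ℝ)) = 0 := by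
      have heq : ∑ i, (w i : ℝ) * (2 * (inner ℝ (v i) (δ r) : ℝ))
          = 2 * (inner ℝ (∑ i, (w i : ℝ) • v i) (δ r) : ℝ) := by
        rw [sum_inner, Finset.mul_sum]
        refine Finset.sum_congr rfl fun i _ => ?_
        rw [real_inner_smul_left]; ring
      rw [heq, hwv0, inner_zero_left, mul_zero]
    rw [hmid, sub_zero, ← Finset.sum_mul]
    rw [totalWeight] at hWdef
    rw [← hWdef, weightedVar]
  have hp1 : ∑ r : Fin m → ι, prodProb w r = 1 := by
    have key := Finset.prod_univ_sum (fun _ : Fin m => (Finset.univ : Finset ι))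
      (fun _ i => pmfWeight w i)
    rw [Fintype.piFinset_univ] at key
    simp only [prodProb, ← key]
    rw [hfdef] at hf1
    simp [hf1]
  have hppos : ∀ r : Fin m → ι, 0 < prodProb w r := fun r =>
    Finset.prod_pos fun j _ => hfpos (r j)
  have hE : ∑ r : Fin m → ι, prodProb w r * (∑ i, (w i : ℝ) * ‖s i - sampleMean s r‖ ^ 2)
      = (1 + 1 / (m : ℝ)) * weightedVar s w := by
    simp_rw [hcost, mul_add]
    rw [Finset.sum_add_distrib, ← Finset.sum_mul, hp1, one_mul]
    have h2 : ∑ r : Fin m → ι, prodProb w r * (W * ‖δ r‖ ^ 2)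
        = (1 / (m : ℝ)) * weightedVar s w := by
      have hδn : ∀ r : Fin m → ι, ‖δ r‖ ^ 2 = (1 / (m : ℝ)) ^ 2 * ‖∑ j, v (r j)‖ ^ 2 := by
        intro r
        rw [hδ r, norm_smul, mul_pow]
        congr 1
        rw [Real.norm_eq_abs, sq_abs]
      simp_rw [hδn]
      have hvk := vec_key f v hf1 hfv0 m
      calc ∑ r : Fin m → ι, prodProb w r * (W * ((1 / (m : ℝ)) ^ 2 * ‖∑ j, v (r j)‖ ^ 2))
          = W * (1 / (m : ℝ)) ^ 2 * ∑ r : Fin m → ι, (∏ j, f (r j)) * ‖∑ j, v (r j)‖ ^ 2 := by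
            rw [Finset.mul_sum]
            refine Finset.sum_congr rfl fun r _ => ?_
            simp only [prodProb, ← hfdef]
            ring
        _ = W * (1 / (m : ℝ)) ^ 2 * ((m : ℝ) * (weightedVar s w / W)) := by
            rw [hvk, hfvV]
        _ = (1 / (m : ℝ)) * weightedVar s w := by
            field_simp
    rw [h2]; ring
  have hVnn : 0 ≤ weightedVar s w :=
    Finset.sum_nonneg fun i _ => mul_nonneg (hwpos i).le (sq_nonneg _)
  by_contra hcon
  push_neg at hcon
  have hlt : (1 + ε) * weightedVar s w
      < ∑ r : Fin m → ι, prodProb w r * (∑ i, (w i : ℝ) * ‖s i - sampleMean s r‖ ^ 2) := by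
    calc (1 + ε) * weightedVar s w
        = ∑ r : Fin m → ι, prodProb w r * ((1 + ε) * weightedVar s w) := by
          rw [← Finset.sum_mul, hp1, one_mul]
      _ < _ := Finset.sum_lt_sum_of_nonempty Finset.univ_nonempty fun r _ =>
          mul_lt_mul_of_pos_left (hcon r) (hppos r)
  rw [hE] at hlt
  nlinarith [hmε, hVnn]
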